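/- Let $u$ be twice differentiable with $u''(x)\to c \in (0,\infty)$ as $x\to\infty$, $\varkappa = \varkappa(\mu)$ the largest solution of $u'(\varkappa)=-\mu$, and $S_\mu(a) = \sum_{k\ge a} e^{-\mu k - u(k)}$. Then for each real $x$, $\lim_{\mu\downarrow\mu_*} e^{u(\varkappa)+\mu\varkappa} S_\mu(\varkappa + x) = \sum_{k \ge x,\, k\in\mathbb{Z}} e^{-c k^2/2}$, where the sum on the right is over integers $k \ge x$ after identifying $k$ with the shift $k - \varkappa$ (valid along sequences of $\mu$ for which $\varkappa(\mu)$ is an integer). -/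

import Mathlib

open Filter Set

-- auxiliary lemmas
lemma le_of_hasDerivAt_nonneg {f f' : ℝ → ℝ} {a b : ℝ} (hab : a ≤ b)
    (hf : ∀ y ∈ Set.Icc a b, HasDerivAt f (f' y) y)
    (h0 : ∀ y ∈ Set.Icc a b, 0 ≤ f' y) : f a ≤ f b := by
  have hm : MonotoneOn f (Set.Icc a b) := by
    apply monotoneOn_of_deriv_nonneg (convex_Icc a b)
    · exact fun y hy => (hf y hy).continuousAt.continuousWithinAt
    · intro y hy
      rw [interior_Icc] at hy
      exact (hf y (Ioo_subset_Icc_self hy)).differentiableAt.differentiableWithinAt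
    · intro y hy
      rw [interior_Icc] at hy
      rw [(hf y (Ioo_subset_Icc_self hy)).deriv]
      exact h0 y (Ioo_subset_Icc_self hy)
  exact hm (left_mem_Icc.2 hab) (right_mem_Icc.2 hab) hab

lemma le_of_hasDerivAt_nonpos {f f' : ℝ → ℝ} {a b : ℝ} (hab : a ≤ b)
    (hf : ∀ y ∈ Set.Icc a b, HasDerivAt f (f' y) y)
    (h0 : ∀ y ∈ Set.Icc a b, f' y ≤ 0) : f b ≤ f a := by
  have := le_of_hasDerivAt_nonneg (f := fun z => -f z) (f' := fun z => -f' z) hab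
    (fun y hy => (hf y hy).neg) (fun y hy => neg_nonneg.2 (h0 y hy))
  linarith

lemma taylor_lower_left {u : ℝ → ℝ} {a b d : ℝ} (hab : a ≤ b)
    (hd : ∀ y ∈ Set.Icc a b, DifferentiableAt ℝ u y)
    (hd' : ∀ y ∈ Set.Icc a b, DifferentiableAt ℝ (deriv u) y)
    (hdd : ∀ y ∈ Set.Icc a b, d ≤ deriv (deriv u) y) :
    d * (b - a) ^ 2 / 2 ≤ u b - u a - deriv u a * (b - a) := by
  have step1 : ∀ y ∈ Set.Icc a b, d * (y - a) ≤ deriv u y - deriv u a := by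
    intro y hy
    have hsub : Set.Icc a y ⊆ Set.Icc a b := fun z hz => ⟨hz.1, hz.2.trans hy.2⟩
    have h := le_of_hasDerivAt_nonneg
      (f := fun z => deriv u z - deriv u a - d * (z - a))
      (f' := fun z => deriv (deriv u) z - d) hy.1
      (fun z hz => by
        have h1 := ((hd' z (hsub hz)).hasDerivAt).sub_const (deriv u a)
        have h2 : HasDerivAt (fun z => d * (z - a)) d z := by
          simpa using ((hasDerivAt_id z).sub_const a).const_mul d
        exact h1.sub h2)
      (fun z hz => sub_nonneg.2 (hdd z (hsub hz)))
    simp only [sub_self, mul_zero, sub_zero] at h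
    linarith
  have h := le_of_hasDerivAt_nonneg
    (f := fun z => u z - u a - deriv u a * (z - a) - d * (z - a) ^ 2 / 2)
    (f' := fun z => deriv u z - deriv u a - d * (z - a)) hab
    (fun z hz => by
      have h1 := ((hd z hz).hasDerivAt).sub_const (u a)
      have h2 : HasDerivAt (fun z => deriv u a * (z - a)) (deriv u a) z := by
        simpa using ((hasDerivAt_id z).sub_const a).const_mul (deriv u a)
      have h3 : HasDerivAt (fun z => d * (z - a) ^ 2 / 2) (d * (z - a)) z := by
        have h4 : HasDerivAt (fun z => (z - a) ^ 2) (2 * (z - a)) z := by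
          exact (((hasDerivAt_id' z).sub_const a).pow 2).congr_deriv (by ring)
        have := (h4.const_mul d).div_const 2
        exact this.congr_deriv (by ring)
      exact (h1.sub h2).sub h3)
    (fun z hz => by have := step1 z hz; linarith)
  simp only [sub_self, mul_zero, zero_pow, zero_div, sub_zero,
    ne_eq, OfNat.ofNat_ne_zero, not_false_eq_true] at h
  linarith

lemma taylor_lower_right {u : ℝ → ℝ} {a b d : ℝ} (hab : a ≤ b)
    (hd : ∀ y ∈ Set.Icc a b, DifferentiableAt ℝ u y)
    (hd' : ∀ y ∈ Set.Icc a b, DifferentiableAt ℝ (deriv u) y)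
    (hdd : ∀ y ∈ Set.Icc a b, d ≤ deriv (deriv u) y) :
    d * (a - b) ^ 2 / 2 ≤ u a - u b - deriv u b * (a - b) := by
  have step1 : ∀ y ∈ Set.Icc a b, deriv u y - deriv u b ≤ d * (y - b) := by
    intro y hy
    have hsub : Set.Icc y b ⊆ Set.Icc a b := fun z hz => ⟨hy.1.trans hz.1, hz.2⟩
    have h := le_of_hasDerivAt_nonneg
      (f := fun z => deriv u z - deriv u b - d * (z - b))
      (f' := fun z => deriv (deriv u) z - d) hy.2
      (fun z hz => by
        have h1 := ((hd' z (hsub hz)).hasDerivAt).sub_const (deriv u b)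
        have h2 : HasDerivAt (fun z => d * (z - b)) d z := by
          simpa using ((hasDerivAt_id z).sub_const b).const_mul d
        exact h1.sub h2)
      (fun z hz => sub_nonneg.2 (hdd z (hsub hz)))
    simp only [sub_self, mul_zero, sub_zero] at h
    linarith
  have h := le_of_hasDerivAt_nonpos
    (f := fun z => u z - u b - deriv u b * (z - b) - d * (z - b) ^ 2 / 2)
    (f' := fun z => deriv u z - deriv u b - d * (z - b)) hab
    (fun z hz => by
      have h1 := ((hd z hz).hasDerivAt).sub_const (u b)
      have h2 : HasDerivAt (fun z => deriv u b * (z - b)) (deriv u b) z := by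
        simpa using ((hasDerivAt_id z).sub_const b).const_mul (deriv u b)
      have h3 : HasDerivAt (fun z => d * (z - b) ^ 2 / 2) (d * (z - b)) z := by
        have h4 : HasDerivAt (fun z => (z - b) ^ 2) (2 * (z - b)) z := by
          exact (((hasDerivAt_id' z).sub_const b).pow 2).congr_deriv (by ring)
        have := (h4.const_mul d).div_const 2
        exact this.congr_deriv (by ring)
      exact (h1.sub h2).sub h3)
    (fun z hz => by have := step1 z hz; linarith)
  simp only [sub_self, mul_zero, zero_pow, zero_div, sub_zero,
    ne_eq, OfNat.ofNat_ne_zero, not_false_eq_true] at h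
  linarith

lemma taylor_lower_min {u : ℝ → ℝ} {κ j d : ℝ}
    (hd : ∀ y ∈ Set.Icc (min κ (κ + j)) (max κ (κ + j)), DifferentiableAt ℝ u y)
    (hd' : ∀ y ∈ Set.Icc (min κ (κ + j)) (max κ (κ + j)), DifferentiableAt ℝ (deriv u) y)
    (hdd : ∀ y ∈ Set.Icc (min κ (κ + j)) (max κ (κ + j)), d ≤ deriv (deriv u) y) :
    d * j ^ 2 / 2 ≤ u (κ + j) - u κ - deriv u κ * j := by
  rcases le_total 0 j with hj | hj
  · have hab : κ ≤ κ + j := by linarith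
    rw [min_eq_left hab, max_eq_right hab] at hd hd' hdd
    have h := taylor_lower_left hab hd hd' hdd
    have e : κ + j - κ = j := by ring
    rwa [e] at h
  · have hab : κ + j ≤ κ := by linarith
    rw [min_eq_right hab, max_eq_left hab] at hd hd' hdd
    have h := taylor_lower_right hab hd hd' hdd
    have e : κ + j - κ = j := by ring
    rwa [e] at h

lemma taylor_upper_min {u : ℝ → ℝ} {κ j D : ℝ}
    (hd : ∀ y ∈ Set.Icc (min κ (κ + j)) (max κ (κ + j)), DifferentiableAt ℝ u y)
    (hd' : ∀ y ∈ Set.Icc (min κ (κ + j)) (max κ (κ + j)), DifferentiableAt ℝ (deriv u) y)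
    (hdd : ∀ y ∈ Set.Icc (min κ (κ + j)) (max κ (κ + j)), deriv (deriv u) y ≤ D) :
    u (κ + j) - u κ - deriv u κ * j ≤ D * j ^ 2 / 2 := by
  have hneg : deriv (fun y => -u y) = fun y => -deriv u y := funext fun y => deriv.neg
  have h := taylor_lower_min (u := fun y => -u y) (κ := κ) (j := j) (d := -D)
    (fun y hy => (hd y hy).neg)
    (fun y hy => by rw [hneg]; exact (hd' y hy).neg)
    (fun y hy => by
      rw [hneg]
      have : deriv (fun y => -deriv u y) y = -deriv (deriv u) y := deriv.neg
      rw [this]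
      linarith [hdd y hy])
  rw [hneg] at h
  dsimp only at h
  linarith

lemma summable_gauss_int {a : ℝ} (ha : 0 < a) :
    Summable (fun j : ℤ => Real.exp (-a * (j : ℝ) ^ 2)) := by
  have hnat : Summable (fun k : ℕ => Real.exp (-a * (k : ℝ) ^ 2)) := by
    have hgeom : Summable (fun k : ℕ => Real.exp (-a) ^ k) :=
      summable_geometric_of_lt_one (Real.exp_pos _).le
        (Real.exp_lt_one_iff.2 (by linarith))
    refine Summable.of_nonneg_of_le (fun k => (Real.exp_pos _).le) (fun k => ?_) hgeom
    rw [← Real.exp_nat_mul]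
    apply Real.exp_le_exp.2
    have hk : (k : ℝ) ≤ (k : ℝ) ^ 2 := by
      have := Nat.le_self_pow (two_ne_zero) k
      exact_mod_cast this
    nlinarith
  apply Summable.of_nat_of_neg
  · simpa using hnat
  · have he : ∀ n : ℕ, Real.exp (-a * (((-(n:ℤ)) : ℤ) : ℝ) ^ 2) = Real.exp (-a * (n : ℝ) ^ 2) := by
      intro n
      congr 1
      push_cast
      ring
    simpa only [he] using hnat

/-- `S_μ(a) = ∑_{k ≥ a, k ≥ 1} e^{-μ k - u(k)}`. -/
noncomputable def Stail (u : ℝ → ℝ) (μ a : ℝ) : ℝ :=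
  ∑' k : ℕ, if a ≤ (k : ℝ) + 1 then
    Real.exp (-(μ * ((k : ℝ) + 1)) - u ((k : ℝ) + 1)) else 0

/-- shifted summand -/
noncomputable def Faux (u : ℝ → ℝ) (x K μ : ℝ) (m : ℕ) (j : ℤ) : ℝ :=
  if x ≤ (j : ℝ) ∧ (1:ℤ) ≤ j + (m : ℤ) then
    Real.exp (-(u (K + (j : ℝ)) - u K + μ * (j : ℝ))) else 0


/-- Discrete Gaussian local profile: if `u''(x) → c ∈ (0,∞)` and `κ(μ)` solves
`u'(κ) = -μ`, then along a sequence of `μ` for which `κ(μ)` is a positive integer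
tending to `∞`, `e^{u(κ)+μκ} S_μ(κ + x) → ∑_{k ∈ ℤ, k ≥ x} e^{-c k²/2}`. -/
theorem discrete_gaussian_local_profile
    (u : ℝ → ℝ) (c : ℝ) (hc : 0 < c)
    (hdiff : ∀ y ∈ Set.Ioi (0:ℝ),
      DifferentiableAt ℝ u y ∧ DifferentiableAt ℝ (deriv u) y)
    (hu'' : Tendsto (fun y => deriv (deriv u) y) atTop (nhds c))
    (κ : ℝ → ℝ) (μseq : ℕ → ℝ)
    (hκ : ∀ n, deriv u (κ (μseq n)) = -(μseq n) ∧
      ∀ y : ℝ, 0 < y → deriv u y = -(μseq n) → y ≤ κ (μseq n))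
    (hint : ∀ n, ∃ m : ℕ, 0 < m ∧ (κ (μseq n) : ℝ) = m)
    (hκtop : Tendsto (fun n => κ (μseq n)) atTop atTop)
    (x : ℝ) :
    Tendsto
      (fun n => Real.exp (u (κ (μseq n)) + μseq n * κ (μseq n)) *
        Stail u (μseq n) (κ (μseq n) + x))
      atTop
      (nhds (∑' k : ℤ, if x ≤ (k : ℝ) then Real.exp (-(c * (k : ℝ) ^ 2) / 2) else 0)) := by
  classical
  choose m hm0 hmeq using hint
  have key : ∀ n, Real.exp (u (κ (μseq n)) + μseq n * κ (μseq n)) *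
      Stail u (μseq n) (κ (μseq n) + x)
      = ∑' j : ℤ, Faux u x (κ (μseq n)) (μseq n) (m n) j := by
    intro n
    have hKm : κ (μseq n) = (m n : ℝ) := hmeq n
    rw [Stail, ← tsum_mul_left]
    have hinj : Function.Injective (fun k : ℕ => (k : ℤ) + 1 - (m n : ℤ)) := by
      intro a b hab
      simpa using hab
    have hsupp : Function.support (Faux u x (κ (μseq n)) (μseq n) (m n)) ⊆
        Set.range (fun k : ℕ => (k : ℤ) + 1 - (m n : ℤ)) := by
      intro j hj
      simp only [Function.mem_support] at hj
      by_contra hjr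
      apply hj
      rw [Faux, if_neg]
      rintro ⟨h1, h2⟩
      apply hjr
      refine ⟨(j + (m n : ℤ) - 1).toNat, ?_⟩
      simp only []
      rw [Int.toNat_of_nonneg (by omega)]
      ring
    rw [← Function.Injective.tsum_eq hinj hsupp]
    apply tsum_congr
    intro k
    have hjr : ((((k : ℤ) + 1 - (m n : ℤ)) : ℤ) : ℝ) = (k : ℝ) + 1 - (m n : ℝ) := by
      push_cast; ring
    rw [Faux, hjr]
    have harg : κ (μseq n) + ((k : ℝ) + 1 - (m n : ℝ)) = (k : ℝ) + 1 := by
      rw [hKm]; ring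
    rw [harg]
    by_cases hcnd : κ (μseq n) + x ≤ (k : ℝ) + 1
    · rw [if_pos hcnd, if_pos, ← Real.exp_add]
      · congr 1
        rw [hKm]
        ring
      · refine ⟨?_, by omega⟩
        rw [hKm] at hcnd
        linarith
    · rw [if_neg hcnd, if_neg, mul_zero]
      rintro ⟨h1, -⟩
      apply hcnd
      rw [hKm]
      linarith
  refine Tendsto.congr (fun n => (key n).symm) ?_
  have hM : ∃ M : ℝ, 1 ≤ M ∧ ∀ y : ℝ, M ≤ y → c / 2 ≤ deriv (deriv u) y := by
    have h := Metric.tendsto_nhds.mp hu'' (c / 2) (by linarith)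
    rw [eventually_atTop] at h
    obtain ⟨M0, hM0⟩ := h
    refine ⟨max M0 1, le_max_right _ _, fun y hy => ?_⟩
    have := hM0 y ((le_max_left _ _).trans hy)
    rw [Real.dist_eq, abs_lt] at this
    linarith
  obtain ⟨M, hM1, hMlo⟩ := hM
  apply tendsto_tsum_of_dominated_convergence
    (bound := fun j : ℤ => if x ≤ (j : ℝ) then Real.exp (-(c / 4) * (j : ℝ) ^ 2) else 0)
  · -- summable bound
    refine Summable.of_nonneg_of_le (fun j => ?_) (fun j => ?_)
      (summable_gauss_int (show (0:ℝ) < c / 4 by linarith))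
    · split_ifs
      exacts [(Real.exp_pos _).le, le_refl 0]
    · split_ifs
      exacts [le_refl _, (Real.exp_pos _).le]
  · -- pointwise limits
    intro j
    by_cases hx : x ≤ (j : ℝ)
    · have hev : (fun n => Faux u x (κ (μseq n)) (μseq n) (m n) j) =ᶠ[atTop]
          (fun n => Real.exp (-(u (κ (μseq n) + (j : ℝ)) - u (κ (μseq n)) + μseq n * (j : ℝ)))) := by
        filter_upwards [hκtop.eventually_ge_atTop ((1:ℝ) - (j : ℝ))] with n hn
        rw [Faux, if_pos]
        refine ⟨hx, ?_⟩
        have h1 : (1:ℝ) ≤ (j : ℝ) + (m n : ℝ) := by rw [← hmeq n]; linarith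
        exact_mod_cast h1
      rw [tendsto_congr' hev]
      have hval : (if x ≤ (j : ℝ) then Real.exp (-(c * (j : ℝ) ^ 2) / 2) else 0)
          = Real.exp (-(c * (j : ℝ) ^ 2 / 2)) := by rw [if_pos hx, neg_div]
      rw [hval]
      have hE : Tendsto (fun n => u (κ (μseq n) + (j : ℝ)) - u (κ (μseq n)) + μseq n * (j : ℝ))
          atTop (nhds (c * (j : ℝ) ^ 2 / 2)) := by
        rw [Metric.tendsto_atTop]
        intro ε hε
        have hd1 : (0:ℝ) < ε / ((j : ℝ) ^ 2 + 1) := by positivity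
        set ε' := min (c / 2) (ε / ((j : ℝ) ^ 2 + 1)) with hε'def
        have hε'pos : 0 < ε' := lt_min (by linarith) hd1
        have h := Metric.tendsto_nhds.mp hu'' ε' hε'pos
        rw [eventually_atTop] at h
        obtain ⟨M0, hM0⟩ := h
        have hMev := hκtop.eventually_ge_atTop (max M0 1 + |(j : ℝ)| + 1)
        rw [eventually_atTop] at hMev
        obtain ⟨n₀, hn₀⟩ := hMev
        refine ⟨n₀, fun n hn => ?_⟩
        have hKn := hn₀ n hn
        set K := κ (μseq n) with hKdef
        have habsj := abs_nonneg (j : ℝ)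
        have hnegj := neg_abs_le (j : ℝ)
        have hjle := le_abs_self (j : ℝ)
        have hmin : max M0 1 ≤ min K (K + (j : ℝ)) := le_min (by linarith) (by linarith)
        have hsubIoi : Set.Icc (min K (K + (j:ℝ))) (max K (K + (j:ℝ))) ⊆ Set.Ioi (0:ℝ) := by
          intro y hy
          have h1 : (1:ℝ) ≤ y := le_trans (le_trans (le_max_right M0 1) hmin) hy.1
          exact lt_of_lt_of_le one_pos h1
        have hdd : ∀ y ∈ Set.Icc (min K (K + (j:ℝ))) (max K (K + (j:ℝ))),
            c - ε' ≤ deriv (deriv u) y ∧ deriv (deriv u) y ≤ c + ε' := by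
          intro y hy
          have hy0 : M0 ≤ y := le_trans (le_trans (le_max_left M0 1) hmin) hy.1
          have h2 := hM0 y hy0
          rw [Real.dist_eq, abs_lt] at h2
          constructor <;> linarith
        have hlow := taylor_lower_min (u := u) (κ := K) (j := (j:ℝ)) (d := c - ε')
          (fun y hy => (hdiff y (hsubIoi hy)).1) (fun y hy => (hdiff y (hsubIoi hy)).2)
          (fun y hy => (hdd y hy).1)
        have hhigh := taylor_upper_min (u := u) (κ := K) (j := (j:ℝ)) (D := c + ε')
          (fun y hy => (hdiff y (hsubIoi hy)).1) (fun y hy => (hdiff y (hsubIoi hy)).2)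
          (fun y hy => (hdd y hy).2)
        have hder : deriv u K = -(μseq n) := (hκ n).1
        have hε'le : ε' * ((j : ℝ) ^ 2 + 1) ≤ ε := by
          have h2 : ε' ≤ ε / ((j : ℝ) ^ 2 + 1) := min_le_right _ _
          have h3 : (0:ℝ) < (j : ℝ) ^ 2 + 1 := by positivity
          calc ε' * ((j : ℝ) ^ 2 + 1) ≤ (ε / ((j : ℝ) ^ 2 + 1)) * ((j : ℝ) ^ 2 + 1) := by
                nlinarith
            _ = ε := div_mul_cancel₀ ε (ne_of_gt h3)
        rw [Real.dist_eq, abs_lt]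
        rw [hder] at hlow hhigh
        constructor <;> nlinarith [sq_nonneg (j : ℝ)]
      exact (Real.continuous_exp.tendsto _).comp hE.neg
    · have hzero : ∀ n, Faux u x (κ (μseq n)) (μseq n) (m n) j = 0 := by
        intro n
        rw [Faux, if_neg]
        rintro ⟨h1, -⟩
        exact hx h1
      simp only [hzero, if_neg hx]
      exact tendsto_const_nhds
  · -- uniform bound
    filter_upwards [hκtop.eventually_ge_atTop (M + |x| + 1)] with n hn
    intro j
    by_cases hcond : x ≤ (j : ℝ) ∧ (1:ℤ) ≤ j + (m n : ℤ)
    · rw [Faux, if_pos hcond, if_pos hcond.1, Real.norm_eq_abs, Real.abs_exp]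
      apply Real.exp_le_exp.2
      set K := κ (μseq n) with hKdef
      have hxabs := neg_abs_le x
      have hxabs0 := abs_nonneg x
      have hjx := hcond.1
      have hmin : M ≤ min K (K + (j : ℝ)) := le_min (by linarith) (by linarith)
      have hsubIoi : Set.Icc (min K (K + (j:ℝ))) (max K (K + (j:ℝ))) ⊆ Set.Ioi (0:ℝ) := by
        intro y hy
        have h1 : (1:ℝ) ≤ y := le_trans (hM1.trans hmin) hy.1
        exact lt_of_lt_of_le one_pos h1
      have hlow := taylor_lower_min (u := u) (κ := K) (j := (j:ℝ)) (d := c / 2)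
        (fun y hy => (hdiff y (hsubIoi hy)).1) (fun y hy => (hdiff y (hsubIoi hy)).2)
        (fun y hy => hMlo y (hmin.trans hy.1))
      have hder : deriv u K = -(μseq n) := (hκ n).1
      rw [hder] at hlow
      nlinarith [sq_nonneg (j : ℝ)]
    · rw [Faux, if_neg hcond, norm_zero]
      split_ifs
      exacts [(Real.exp_pos _).le, le_refl 0]
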